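/- Let a_f, a_k ∈ ℝ, τ_f, τ_k ∈ ℝ \ {0} with τ_k + β·τ_f ≠ 0, β ∈ ℝ and λ > 0, and define ỹ(x) = (a_f − x^λ)/τ_f + β·(a_k − x^λ)/τ_k and w̃(x) = x·ỹ(x). Suppose x₂* > 0 satisfies (x₂*)^λ = (a_f·τ_k + β·a_k·τ_f)/((1 + λ)·(τ_k + β·τ_f)), and x₁* > 0 satisfies (x₁*)^λ = (x₂*)^λ·(1 − (λ/(1 + λ))·x₂*). Then ỹ(x₁*) + x₁*·ỹ′(x₁*) = x₂*·ỹ(x₂*), i.e. w̃′(x₁*) = w̃(x₂*), which is the first-order condition for the optimal first-serve strategy. -/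
import Mathlib


/-- the closed forms for (x₂*)^λ and (x₁*)^λ solve the first-serve
first-order condition w̃′(x₁*) = w̃(x₂*). -/
theorem stmt11 (af ak τf τk β lam x₁ x₂ : ℝ)
    (hτf : τf ≠ 0) (hτk : τk ≠ 0) (hden : τk + β * τf ≠ 0) (hlam : 0 < lam)
    (ytil : ℝ → ℝ)
    (hy : ytil = fun x : ℝ => (af - x ^ lam) / τf + β * ((ak - x ^ lam) / τk))
    (hx₂ : 0 < x₂)
    (heq₂ : x₂ ^ lam = (af * τk + β * (ak * τf)) / ((1 + lam) * (τk + β * τf)))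
    (hx₁ : 0 < x₁)
    (heq₁ : x₁ ^ lam = x₂ ^ lam * (1 - lam / (1 + lam) * x₂)) :
    ytil x₁ + x₁ * deriv ytil x₁ = x₂ * ytil x₂ := by
  have hx₁0 : x₁ ≠ 0 := hx₁.ne'
  have hrpow : HasDerivAt (fun x : ℝ => x ^ lam) (lam * x₁ ^ (lam - 1)) x₁ :=
    Real.hasDerivAt_rpow_const (Or.inl hx₁0)
  have hder : HasDerivAt ytil
      ((0 - lam * x₁ ^ (lam - 1)) / τf + β * ((0 - lam * x₁ ^ (lam - 1)) / τk)) x₁ := by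
    rw [hy]
    exact (((hasDerivAt_const x₁ af).sub hrpow).div_const τf).add
      ((((hasDerivAt_const x₁ ak).sub hrpow).div_const τk).const_mul β)
  have hd : deriv ytil x₁ = (0 - lam * x₁ ^ (lam - 1)) / τf + β * ((0 - lam * x₁ ^ (lam - 1)) / τk) :=
    hder.deriv
  have hpow : x₁ ^ (lam - 1) = x₁ ^ lam / x₁ := by
    rw [Real.rpow_sub_one hx₁0]
  have h1lam : (1 + lam) ≠ 0 := by positivity
  rw [hd, hpow, hy]
  simp only
  rw [heq₁, heq₂]
  field_simp
  ring
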